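/- Under the multiplicative update h^{t+1}_a = h^t_a (∑_i W_{ia} v_i / (W h^t)_i) / (∑_k W_{ka}) with W, v, h^t strictly positive, the generalized KL divergence F(h) = ∑_i [v_i log(v_i/(Wh)_i) − v_i + (Wh)_i] satisfies F(h^{t+1}) ≤ F(h^t). -/
import Mathlib


open Finset Real

theorem multiplicative_update_decreases_kl {n r : ℕ}
    (W : Fin n → Fin r → ℝ) (hW : ∀ i a, 0 < W i a)
    (v : Fin n → ℝ) (hv : ∀ i, 0 < v i)
    (ht : Fin r → ℝ) (hht : ∀ a, 0 < ht a)
    (ht1 : Fin r → ℝ)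
    (hupd : ∀ a, ht1 a = ht a * (∑ i, W i a * v i / ∑ b, W i b * ht b) / (∑ k, W k a))
    (F : (Fin r → ℝ) → ℝ)
    (hF : ∀ h, F h = ∑ i, (v i * Real.log (v i / ∑ a, W i a * h a) - v i + ∑ a, W i a * h a)) :
    F ht1 ≤ F ht := by
  rcases Nat.eq_zero_or_pos n with hn | hn
  · subst hn; simp [hF]
  rcases Nat.eq_zero_or_pos r with hr | hr
  · subst hr
    have h1 : ht1 = ht := funext fun a => a.elim0
    rw [h1]
  have hnn : Nonempty (Fin n) := ⟨⟨0, hn⟩⟩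
  have hrr : Nonempty (Fin r) := ⟨⟨0, hr⟩⟩
  set Wh : Fin n → ℝ := fun i => ∑ a, W i a * ht a with hWhdef
  have hWh : ∀ i, 0 < Wh i := fun i =>
    Finset.sum_pos (fun a _ => mul_pos (hW i a) (hht a)) Finset.univ_nonempty
  set S : Fin r → ℝ := fun a => ∑ k, W k a with hSdef
  have hS : ∀ a, 0 < S a := fun a =>
    Finset.sum_pos (fun k _ => hW k a) Finset.univ_nonempty
  set c : Fin r → ℝ := fun a => ∑ i, W i a * v i / Wh i with hcdef
  have hc : ∀ a, 0 < c a := fun a =>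
    Finset.sum_pos (fun i _ => div_pos (mul_pos (hW i a) (hv i)) (hWh i)) Finset.univ_nonempty
  set x : Fin r → ℝ := fun a => c a / S a with hxdef
  have hx : ∀ a, 0 < x a := fun a => div_pos (hc a) (hS a)
  have hupd' : ∀ a, ht1 a = ht a * x a := by
    intro a
    rw [hupd a, mul_div_assoc]
  have hht1 : ∀ a, 0 < ht1 a := fun a => (hupd' a) ▸ mul_pos (hht a) (hx a)
  set Wh1 : Fin n → ℝ := fun i => ∑ a, W i a * ht1 a with hWh1def
  have hWh1 : ∀ i, 0 < Wh1 i := fun i =>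
    Finset.sum_pos (fun a _ => mul_pos (hW i a) (hht1 a)) Finset.univ_nonempty
  set L : Fin r → ℝ := fun a => Real.log (x a) with hLdef
  have hcx : ∀ a, c a = S a * x a := by
    intro a
    simp only [hxdef]
    rw [mul_comm, div_mul_cancel₀ _ (hS a).ne']
  -- Step A: Jensen-type inequality
  have stepA : ∀ i, Real.log (Wh i) - Real.log (Wh1 i) ≤ - ∑ a, (W i a * ht a / Wh i) * L a := by
    intro i
    set lam : Fin r → ℝ := fun a => W i a * ht a / Wh i with hlamdef
    have hlam : ∀ a, 0 < lam a := fun a => div_pos (mul_pos (hW i a) (hht a)) (hWh i)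
    have hlam1 : ∑ a, lam a = 1 := by
      simp only [hlamdef]
      rw [← Finset.sum_div, div_self (hWh i).ne']
    set M : ℝ := Wh1 i / Wh i with hMdef
    have hM : 0 < M := div_pos (hWh1 i) (hWh i)
    have hMsum : ∑ a, lam a * x a = M := by
      rw [hMdef]
      simp only [hWh1def]
      rw [Finset.sum_div]
      refine Finset.sum_congr rfl fun a _ => ?_
      simp only [hlamdef]
      rw [hupd' a]
      ring
    have hdiff : Real.log (Wh1 i) - Real.log (Wh i) = Real.log M :=
      (Real.log_div (hWh1 i).ne' (hWh i).ne').symm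
    have step1 : ∀ a, lam a * L a ≤ lam a * (Real.log M + (x a / M - 1)) := by
      intro a
      apply mul_le_mul_of_nonneg_left _ (hlam a).le
      have h2 : Real.log (x a / M) ≤ x a / M - 1 :=
        Real.log_le_sub_one_of_pos (div_pos (hx a) hM)
      rw [Real.log_div (hx a).ne' hM.ne'] at h2
      simp only [hLdef]
      linarith
    have step2 : ∑ a, lam a * (Real.log M + (x a / M - 1)) = Real.log M := by
      have expand : ∀ a ∈ Finset.univ,
          lam a * (Real.log M + (x a / M - 1)) = lam a * x a / M + lam a * (Real.log M - 1) :=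
        fun a _ => by ring
      rw [Finset.sum_congr rfl expand, Finset.sum_add_distrib, ← Finset.sum_div, hMsum,
        ← Finset.sum_mul, hlam1, div_self hM.ne']
      ring
    have : ∑ a, lam a * L a ≤ Real.log M := by
      rw [← step2]
      exact Finset.sum_le_sum fun a _ => step1 a
    linarith [hdiff]
  -- express F values
  have hFht1 : F ht1 = ∑ i, (v i * Real.log (v i / Wh1 i) - v i + Wh1 i) := by
    rw [hF]
  have hFht : F ht = ∑ i, (v i * Real.log (v i / Wh i) - v i + Wh i) := by
    rw [hF]
  have key : F ht1 - F ht ≤ 0 := by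
    rw [hFht1, hFht, ← Finset.sum_sub_distrib]
    have eq1 : ∀ i ∈ Finset.univ,
        (v i * Real.log (v i / Wh1 i) - v i + Wh1 i) - (v i * Real.log (v i / Wh i) - v i + Wh i)
          = v i * (Real.log (Wh i) - Real.log (Wh1 i)) + (Wh1 i - Wh i) := by
      intro i _
      rw [Real.log_div (hv i).ne' (hWh1 i).ne', Real.log_div (hv i).ne' (hWh i).ne']
      ring
    rw [Finset.sum_congr rfl eq1]
    have bound : ∀ i ∈ Finset.univ,
        v i * (Real.log (Wh i) - Real.log (Wh1 i)) + (Wh1 i - Wh i)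
          ≤ v i * (- ∑ a, (W i a * ht a / Wh i) * L a) + (Wh1 i - Wh i) := by
      intro i _
      have := mul_le_mul_of_nonneg_left (stepA i) (hv i).le
      linarith
    calc ∑ i, (v i * (Real.log (Wh i) - Real.log (Wh1 i)) + (Wh1 i - Wh i))
        ≤ ∑ i, (v i * (- ∑ a, (W i a * ht a / Wh i) * L a) + (Wh1 i - Wh i)) :=
          Finset.sum_le_sum bound
      _ = ∑ a, (ht a * S a * (x a - 1 - x a * L a)) := by
          have eq2 : ∀ i ∈ Finset.univ,
              v i * (- ∑ a, (W i a * ht a / Wh i) * L a) + (Wh1 i - Wh i)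
                = ∑ a, ((-(ht a * L a)) * (W i a * v i / Wh i) + (ht1 a - ht a) * W i a) := by
            intro i _
            have hWh1i : Wh1 i = ∑ a, W i a * ht1 a := by simp only [hWh1def]
            have hWhi : Wh i = ∑ a, W i a * ht a := by simp only [hWhdef]
            rw [hWh1i, hWhi, ← Finset.sum_sub_distrib, mul_neg, Finset.mul_sum,
              ← Finset.sum_neg_distrib, ← Finset.sum_add_distrib]
            refine Finset.sum_congr rfl fun a _ => ?_
            ring
          rw [Finset.sum_congr rfl eq2, Finset.sum_comm]
          refine Finset.sum_congr rfl fun a _ => ?_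
          rw [Finset.sum_add_distrib, ← Finset.mul_sum, ← Finset.mul_sum]
          have hci : (∑ i, W i a * v i / Wh i) = c a := by simp only [hcdef]
          have hSi : (∑ i, W i a) = S a := by simp only [hSdef]
          rw [hci, hSi, hcx a, hupd' a]
          ring
      _ ≤ 0 := by
          apply Finset.sum_nonpos
          intro a _
          have h1 : -(L a) ≤ (x a)⁻¹ - 1 := by
            have := Real.log_le_sub_one_of_pos (inv_pos.2 (hx a))
            rw [Real.log_inv] at this
            simp only [hLdef]
            linarith
          have h2 : x a * (x a)⁻¹ = 1 := mul_inv_cancel₀ (hx a).ne'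
          have h3 : x a - 1 - x a * L a ≤ 0 := by nlinarith [hx a]
          have h4 : 0 ≤ ht a * S a := (mul_pos (hht a) (hS a)).le
          exact mul_nonpos_of_nonneg_of_nonpos h4 h3
  linarith
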